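/- Let G be a reflexive graph. The avoidance class Av(G) within all finite reflexive graphs, under the surjective homomorphism ordering, is well quasi-ordered if and only if G is isomorphic to a partial subcomplete graph N_{n,k} with 2k < n. -/

import Mathlib

/-- A finite structure with a single binary relation (digraph/graph model). -/
structure FinBinRel where
  n : ℕ
  rel : Fin n → Fin n → Prop

/-- `f` is a homomorphism from `A` to `B`: it maps related pairs to related pairs. -/
def IsHom (A B : FinBinRel) (f : Fin A.n → Fin B.n) : Prop :=
  ∀ x y, A.rel x y → B.rel (f x) (f y)

/-- `f` is a strong homomorphism: a homomorphism such that every related pair of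
elements of the image is the image of a related pair. -/
def IsStrongHom (A B : FinBinRel) (f : Fin A.n → Fin B.n) : Prop :=
  IsHom A B f ∧
    ∀ p q : Fin B.n, B.rel p q → (∃ a, f a = p) → (∃ b, f b = q) →
      ∃ u v, A.rel u v ∧ f u = p ∧ f v = q

/-- Homomorphic image ordering: `A ⪯ B` iff there is a surjective homomorphism `B → A`. -/
def HomLe (A B : FinBinRel) : Prop :=
  ∃ f : Fin B.n → Fin A.n, Function.Surjective f ∧ IsHom B A f

/-- Strong homomorphic image ordering: `A ⪯ B` iff there is a surjective strong
homomorphism `B → A`. -/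
def StrongLe (A B : FinBinRel) : Prop :=
  ∃ f : Fin B.n → Fin A.n, Function.Surjective f ∧ IsStrongHom B A f

/-- Isomorphism of binary relational structures. -/
def BinIso (A B : FinBinRel) : Prop :=
  ∃ e : Fin A.n ≃ Fin B.n, ∀ x y, A.rel x y ↔ B.rel (e x) (e y)

/-- A class `C` is well quasi-ordered by `r`: every infinite sequence of members of `C`
contains a "good pair". (For orderings on finite structures respecting size this is
equivalent to having no infinite antichain.) -/
def IsWqo (r : FinBinRel → FinBinRel → Prop) (C : Set FinBinRel) : Prop :=
  ∀ f : ℕ → FinBinRel, (∀ i, f i ∈ C) → ∃ i j, i < j ∧ r (f i) (f j)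

/-- A reflexive graph: symmetric relation with a loop at every vertex. -/
def ReflGraph (A : FinBinRel) : Prop :=
  (∀ x, A.rel x x) ∧ (∀ x y, A.rel x y → A.rel y x)

/-- An irreflexive graph: symmetric and loopless. -/
def IrrGraph (A : FinBinRel) : Prop :=
  (∀ x, ¬ A.rel x x) ∧ (∀ x y, A.rel x y → A.rel y x)

/-- The irreflexive complete graph on `n` vertices. -/
def Kirr (n : ℕ) : FinBinRel := ⟨n, fun i j => i ≠ j⟩

/-- The complete reflexive graph/digraph on `n` vertices (all pairs, including loops). -/
def Kcompl (n : ℕ) : FinBinRel := ⟨n, fun _ _ => True⟩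

/-- The subcomplete reflexive graph `N_{n,k}` (for `2k ≤ n`): the complete reflexive
graph on `n` vertices with the `k` disjoint edges `{0,1},{2,3},…,{2k-2,2k-1}` deleted. -/
def Ngraph (n k : ℕ) : FinBinRel :=
  ⟨n, fun i j => ¬ ∃ m, m < k ∧
      ((i.val = 2 * m ∧ j.val = 2 * m + 1) ∨ (j.val = 2 * m ∧ i.val = 2 * m + 1))⟩

/-- The subcomplete digraph `N⃗_{n,k}` (for `2k ≤ n`): the complete reflexive digraph
on `n` vertices with the `k` disjoint directed edges `(0,1),(2,3),…,(2k-2,2k-1)` removed. -/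
def Ndigraph (n k : ℕ) : FinBinRel :=
  ⟨n, fun i j => ¬ ∃ m, m < k ∧ i.val = 2 * m ∧ j.val = 2 * m + 1⟩

/-- `D` has a set of `k` pairwise disjoint edges (all `2k` endpoints distinct). -/
def HasDisjointEdges (D : FinBinRel) (k : ℕ) : Prop :=
  ∃ a b : Fin k → Fin D.n,
    Function.Injective (Sum.elim a b) ∧ ∀ i, D.rel (a i) (b i)


open scoped Classical

section Basics

lemma biniso_symm {A B : FinBinRel} (h : BinIso A B) : BinIso B A := by
  obtain ⟨e, he⟩ := h
  exact ⟨e.symm, fun x y => by rw [he]; simp⟩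

lemma homle_congr_left {A A' B : FinBinRel} (h : BinIso A A') :
    HomLe A B ↔ HomLe A' B := by
  obtain ⟨e, he⟩ := h
  constructor
  · rintro ⟨f, hs, hh⟩
    exact ⟨fun v => e (f v), e.surjective.comp hs, fun x y hxy => (he _ _).mp (hh x y hxy)⟩
  · rintro ⟨f, hs, hh⟩
    refine ⟨fun v => e.symm (f v), e.symm.surjective.comp hs, fun x y hxy => ?_⟩
    have := hh x y hxy
    rw [he]
    simpa using this

lemma ngraph_refl (n k : ℕ) : ReflGraph (Ngraph n k) := by
  constructor
  · rintro x ⟨m, hm, h | h⟩ <;> omega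
  · rintro x y h ⟨m, hm, h2⟩
    exact h ⟨m, hm, h2.symm⟩

lemma ngraph_match {n k : ℕ} {u v w : Fin n} (h1 : ¬ (Ngraph n k).rel u v)
    (h2 : ¬ (Ngraph n k).rel u w) : v = w := by
  simp only [Ngraph, not_not] at h1 h2
  obtain ⟨m, hm, hm1⟩ := h1
  obtain ⟨m', hm', hm2⟩ := h2
  rcases hm1 with ⟨e1, e2⟩ | ⟨e1, e2⟩ <;> rcases hm2 with ⟨e3, e4⟩ | ⟨e3, e4⟩ <;>
    (apply Fin.ext; omega)

lemma ngraph_partner {k : ℕ} (p : Fin (2*k)) : ∃ q, ¬ (Ngraph (2*k) k).rel p q := by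
  have hp := p.isLt
  refine ⟨((⟨if p.val % 2 = 0 then p.val + 1 else p.val - 1, by split_ifs <;> omega⟩ : Fin (2*k)) : Fin ((Ngraph (2*k) k).n)), ?_⟩
  simp only [Ngraph, not_not]
  refine ⟨p.val / 2, by omega, ?_⟩
  by_cases h : p.val % 2 = 0
  · left
    refine ⟨by omega, ?_⟩
    show (if p.val % 2 = 0 then p.val + 1 else p.val - 1) = 2 * (p.val / 2) + 1
    rw [if_pos h]; omega
  · right
    refine ⟨?_, ?_⟩
    · show (if p.val % 2 = 0 then p.val + 1 else p.val - 1) = 2 * (p.val / 2)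
      rw [if_neg h]; omega
    · omega

end Basics

section ModArith

lemma mod_succ {L u : ℕ} (hu : u < L) : (u+1) % L = if u + 1 = L then 0 else u + 1 := by
  split_ifs with h
  · rw [h, Nat.mod_self]
  · exact Nat.mod_eq_of_lt (by omega)

lemma mod_addpred {L v : ℕ} (hv : v < L) : (v + (L-1)) % L = if v = 0 then L - 1 else v - 1 := by
  split_ifs with h
  · subst h; rw [Nat.zero_add]; exact Nat.mod_eq_of_lt (by omega)
  · have he : v + (L-1) = (v-1) + 1 * L := by omega
    rw [he, Nat.add_mul_mod_self_right, Nat.mod_eq_of_lt (show v - 1 < L by omega)]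

/-- adjacency in the `L`-cycle, on values -/
def NAdj (L u v : ℕ) : Prop := (u+1) % L = v ∨ (v+1) % L = u

lemma nadj_expand {L u v : ℕ} (hu : u < L) (hv : v < L) :
    NAdj L u v ↔ ((u+1 = L ∧ v = 0) ∨ (u + 1 < L ∧ v = u+1) ∨ (v+1 = L ∧ u = 0) ∨ (v + 1 < L ∧ u = v+1)) := by
  unfold NAdj
  rw [mod_succ hu, mod_succ hv]
  split_ifs <;> omega

lemma no_K22 {L u u' v w : ℕ} (hL : L % 2 = 1) (hu : u < L) (hu' : u' < L) (hv : v < L)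
    (hw : w < L) (huu : u ≠ u') (hvw : v ≠ w)
    (h1 : NAdj L u v) (h2 : NAdj L u w) (h3 : NAdj L u' v) (h4 : NAdj L u' w) : False := by
  rw [nadj_expand hu hv] at h1
  rw [nadj_expand hu hw] at h2
  rw [nadj_expand hu' hv] at h3
  rw [nadj_expand hu' hw] at h4
  omega

lemma nadj_cases {L u v : ℕ} (hu : u < L) (hv : v < L) (h : NAdj L u v) :
    u = (v+1) % L ∨ u = (v + (L-1)) % L := by
  rw [nadj_expand hu hv] at h
  rw [mod_succ hv, mod_addpred hv]
  split_ifs <;> omega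

end ModArith

section Cyc

/-- complement of the cycle of odd length `2m+3`, as a reflexive graph -/
def cyc (m : ℕ) : FinBinRel :=
  ⟨2*m+3, fun i j => ¬ ((i.val + 1) % (2*m+3) = j.val ∨ (j.val + 1) % (2*m+3) = i.val)⟩

@[simp] lemma cyc_n (m : ℕ) : (cyc m).n = 2*m+3 := rfl

@[simp] lemma ngraph_n (n k : ℕ) : (Ngraph n k).n = n := rfl

lemma cyc_refl (m : ℕ) : ReflGraph (cyc m) := by
  constructor
  · intro x h
    have hx : x.val < 2*m+3 := x.isLt
    rw [mod_succ hx] at h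
    rcases h with h | h <;> (revert h; split_ifs <;> omega)
  · intro x y h hc
    exact h hc.symm

lemma cyc_not_rel {m : ℕ} {u v : Fin (2*m+3)} (h : ¬ (cyc m).rel u v) :
    NAdj (2*m+3) u.val v.val := by
  simp only [cyc, not_not] at h
  exact h

lemma cyc_nonadj_pair (m : ℕ) (p : Fin (2*m+3)) :
    ∃ q1 q2 : Fin (2*m+3), q1 ≠ q2 ∧ ¬ (cyc m).rel p q1 ∧ ¬ (cyc m).rel p q2 := by
  have hp := p.isLt
  refine ⟨⟨(p.val+1) % (2*m+3), Nat.mod_lt _ (by omega)⟩,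
          ⟨(p.val + (2*m+3-1)) % (2*m+3), Nat.mod_lt _ (by omega)⟩, ?_, ?_, ?_⟩
  · simp only [ne_eq, Fin.mk.injEq]
    rw [mod_succ hp, mod_addpred hp]
    split_ifs <;> omega
  · simp only [cyc, not_not]
    left; trivial
  · simp only [cyc, not_not]
    right
    show ((p.val + (2*m+3-1)) % (2*m+3) + 1) % (2*m+3) = p.val
    rw [mod_addpred hp]
    split_ifs with h
    · rw [show (2*m+3-1)+1 = 2*m+3 by omega, Nat.mod_self]; omega
    · rw [show p.val - 1 + 1 = p.val by omega, Nat.mod_eq_of_lt hp]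

section Antichains

lemma ngraph_match2 {n k : ℕ} {u v w : Fin n} (h1 : ¬ (Ngraph n k).rel u w)
    (h2 : ¬ (Ngraph n k).rel v w) : u = v := by
  simp only [Ngraph, not_not] at h1 h2
  obtain ⟨m, hm, hm1⟩ := h1
  obtain ⟨m', hm', hm2⟩ := h2
  rcases hm1 with ⟨e1, e2⟩ | ⟨e1, e2⟩ <;> rcases hm2 with ⟨e3, e4⟩ | ⟨e3, e4⟩ <;>
    (apply Fin.ext; omega)

lemma NN_avoid {G : FinBinRel} {x y z : Fin G.n} (hyz : y ≠ z) (hxy : ¬ G.rel x y)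
    (hxz : ¬ G.rel x z) (i : ℕ) : ¬ HomLe G (Ngraph (2*(i+1)) (i+1)) := by
  rintro ⟨f, hsurj, hhom⟩
  obtain ⟨u, hu⟩ := hsurj x
  obtain ⟨v, hv⟩ := hsurj y
  obtain ⟨w, hw⟩ := hsurj z
  have h1 : ¬ (Ngraph (2*(i+1)) (i+1)).rel u v := fun hr => hxy (by rw [← hu, ← hv]; exact hhom u v hr)
  have h2 : ¬ (Ngraph (2*(i+1)) (i+1)).rel u w := fun hr => hxz (by rw [← hu, ← hw]; exact hhom u w hr)
  exact hyz (by rw [← hv, ← hw, ngraph_match h1 h2])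

lemma NN_antichain {i j : ℕ} (hij : i < j) :
    ¬ HomLe (Ngraph (2*(i+1)) (i+1)) (Ngraph (2*(j+1)) (j+1)) := by
  rintro ⟨f0, hsurj, hhom⟩
  have key : ∀ f : Fin (2*(j+1)) → Fin (2*(i+1)), Function.Surjective f →
      (∀ x y, (Ngraph (2*(j+1)) (j+1)).rel x y → (Ngraph (2*(i+1)) (i+1)).rel (f x) (f y)) →
      False := by
    intro f hs hh
    have hinj : Function.Injective f := by
      intro u u' huu
      obtain ⟨q, hq⟩ := ngraph_partner (k := i+1) (f u)
      obtain ⟨v, hv⟩ := hs q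
      have h1 : ¬ (Ngraph (2*(j+1)) (j+1)).rel u v := fun hr => hq (by rw [← hv]; exact hh u v hr)
      have h2 : ¬ (Ngraph (2*(j+1)) (j+1)).rel u' v := fun hr => hq (by
        rw [← hv, huu]; exact hh u' v hr)
      exact ngraph_match2 h1 h2
    have hcard : (2*(j+1)) ≤ (2*(i+1)) := by
      simpa using Fintype.card_le_of_injective f hinj
    omega
  exact key f0 hsurj hhom

lemma cyc_antichain {i j : ℕ} (hij : i < j) : ¬ HomLe (cyc i) (cyc j) := by
  rintro ⟨f0, hsurj, hhom⟩
  have key : ∀ f : Fin (2*j+3) → Fin (2*i+3), Function.Surjective f →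
      (∀ x y, (cyc j).rel x y → (cyc i).rel (f x) (f y)) → False := by
    intro f hs hh
    have hinj : Function.Injective f := by
      intro u u' huu
      by_contra hne
      obtain ⟨q1, q2, hq12, hpq1, hpq2⟩ := cyc_nonadj_pair i (f u)
      obtain ⟨v, hv⟩ := hs q1
      obtain ⟨w, hw⟩ := hs q2
      have a1 : NAdj (2*j+3) u.val v.val := cyc_not_rel (fun hr => hpq1 (by rw [← hv]; exact hh u v hr))
      have a2 : NAdj (2*j+3) u.val w.val := cyc_not_rel (fun hr => hpq2 (by rw [← hw]; exact hh u w hr))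
      have a3 : NAdj (2*j+3) u'.val v.val := cyc_not_rel (fun hr => hpq1 (by
        rw [← hv, huu]; exact hh u' v hr))
      have a4 : NAdj (2*j+3) u'.val w.val := cyc_not_rel (fun hr => hpq2 (by
        rw [← hw, huu]; exact hh u' w hr))
      have hvw : v.val ≠ w.val := fun h => hq12 (by rw [← hv, ← hw, Fin.ext h])
      exact no_K22 (by omega) u.isLt u'.isLt v.isLt w.isLt
        (fun h => hne (Fin.ext h)) hvw a1 a2 a3 a4
    have hcard : (2*j+3) ≤ (2*i+3) := by
      simpa using Fintype.card_le_of_injective f hinj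
    omega
  exact key f0 hsurj hhom

lemma cyc_avoid {k m : ℕ} (hm : 2*k ≤ m) : ¬ HomLe (Ngraph (2*k) k) (cyc m) := by
  rintro ⟨f0, hsurj, hhom⟩
  have key : ∀ f : Fin (2*m+3) → Fin (2*k), Function.Surjective f →
      (∀ x y, (cyc m).rel x y → (Ngraph (2*k) k).rel (f x) (f y)) → False := by
    intro f hs hh
    have hfib : ∀ p : Fin (2*k),
        (Finset.filter (fun v : Fin (2*m+3) => f v = p) Finset.univ).card ≤ 2 := by
      intro p
      obtain ⟨q, hq⟩ := ngraph_partner p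
      obtain ⟨y, hy⟩ := hs q
      have hsub : Finset.filter (fun v : Fin (2*m+3) => f v = p) Finset.univ ⊆
          {(⟨(y.val+1) % (2*m+3), Nat.mod_lt _ (by omega)⟩ : Fin (2*m+3)),
           ⟨(y.val + (2*m+3-1)) % (2*m+3), Nat.mod_lt _ (by omega)⟩} := by
        intro v hvmem
        simp only [Finset.mem_filter] at hvmem
        have hnr : ¬ (cyc m).rel v y := fun hr => hq (by rw [← hy, ← hvmem.2]; exact hh v y hr)
        have hcase := nadj_cases (v.isLt : v.val < 2*m+3) (y.isLt : y.val < 2*m+3) (cyc_not_rel hnr)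
        simp only [Finset.mem_insert, Finset.mem_singleton]
        rcases hcase with h | h
        · left; exact Fin.ext h
        · right; exact Fin.ext h
      calc (Finset.filter (fun v : Fin (2*m+3) => f v = p) Finset.univ).card
          ≤ _ := Finset.card_le_card hsub
        _ ≤ 2 := (Finset.card_insert_le _ _).trans (by simp)
    have hsum := Finset.card_eq_sum_card_fiberwise
      (f := f) (s := (Finset.univ : Finset (Fin (2*m+3)))) (t := (Finset.univ : Finset (Fin (2*k))))
      (fun x _ => Finset.mem_univ _)
    have hb : ∑ p ∈ (Finset.univ : Finset (Fin (2*k))),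
        (Finset.filter (fun v : Fin (2*m+3) => f v = p) Finset.univ).card
        ≤ ∑ _p ∈ (Finset.univ : Finset (Fin (2*k))), 2 :=
      Finset.sum_le_sum (fun p _ => hfib p)
    rw [← hsum] at hb
    simp only [Finset.sum_const, Finset.card_univ, Fintype.card_fin, smul_eq_mul] at hb
    omega
  exact key f0 hsurj hhom

end Antichains

section MatchingIso

set_option maxHeartbeats 2000000 in
lemma matching_iso (G : FinBinRel) (hG : ReflGraph G)
    (hmax : ∀ x y z : Fin G.n, ¬G.rel x y → ¬G.rel x z → y = z) :
    ∃ k, 2*k ≤ G.n ∧ BinIso G (Ngraph G.n k) := by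
  classical
  have hMsymm : ∀ x y : Fin G.n, ¬ G.rel x y → ¬ G.rel y x := fun x y h hr => h (hG.2 _ _ hr)
  have hMne : ∀ x y : Fin G.n, ¬ G.rel x y → x ≠ y := fun x y h he => h (he ▸ hG.1 x)
  set pr : Fin G.n → Fin G.n := fun x => if h : ∃ y, ¬ G.rel x y then h.choose else x with hpr
  have hpr_spec : ∀ x : Fin G.n, (∃ y, ¬ G.rel x y) → ¬ G.rel x (pr x) := by
    intro x h
    simp only [hpr]
    rw [dif_pos h]
    exact h.choose_spec
  have hpr_uniq : ∀ x y : Fin G.n, ¬ G.rel x y → pr x = y :=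
    fun x y h => hmax x (pr x) y (hpr_spec x ⟨y, h⟩) h
  set L : Finset (Fin G.n) := Finset.filter (fun x => ∃ y, ¬ G.rel x y ∧ x < y) Finset.univ with hL
  set P : Finset (Fin G.n) := Finset.filter (fun x => ∃ y, ¬ G.rel x y ∧ y < x) Finset.univ with hP
  set U : Finset (Fin G.n) := Finset.filter (fun x => ∀ y, G.rel x y) Finset.univ with hU
  have hLmem : ∀ x, x ∈ L ↔ ∃ y, ¬ G.rel x y ∧ x < y := by intro x; simp [hL]
  have hPmem : ∀ x, x ∈ P ↔ ∃ y, ¬ G.rel x y ∧ y < x := by intro x; simp [hP]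
  have hUmem : ∀ x, x ∈ U ↔ ∀ y, G.rel x y := by intro x; simp [hU]
  have hprP : ∀ x ∈ L, pr x ∈ P := by
    intro x hx
    obtain ⟨y, hy, hlt⟩ := (hLmem x).mp hx
    have he : pr x = y := hpr_uniq x y hy
    exact (hPmem _).mpr ⟨x, hMsymm x (pr x) (he ▸ hy), he ▸ hlt⟩
  have hMprL : ∀ x ∈ L, ¬ G.rel x (pr x) := by
    intro x hx
    obtain ⟨y, hy, _⟩ := (hLmem x).mp hx
    exact hpr_spec x ⟨y, hy⟩
  have hLP : Disjoint L P := by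
    rw [Finset.disjoint_left]
    intro x hx hx'
    obtain ⟨y, hy, hlt⟩ := (hLmem x).mp hx
    obtain ⟨z, hz, hgt⟩ := (hPmem x).mp hx'
    have : y = z := hmax x y z hy hz
    subst this
    exact absurd hgt (by omega)
  have hLU : Disjoint L U := by
    rw [Finset.disjoint_left]
    intro x hx hx'
    obtain ⟨y, hy, _⟩ := (hLmem x).mp hx
    exact hy ((hUmem x).mp hx' y)
  have hPU : Disjoint P U := by
    rw [Finset.disjoint_left]
    intro x hx hx'
    obtain ⟨y, hy, _⟩ := (hPmem x).mp hx
    exact hy ((hUmem x).mp hx' y)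
  have hcover : L ∪ P ∪ U = Finset.univ := by
    apply Finset.eq_univ_of_forall
    intro x
    simp only [Finset.mem_union]
    by_cases hx : ∃ y, ¬ G.rel x y
    · obtain ⟨y, hy⟩ := hx
      rcases lt_or_gt_of_ne (hMne x y hy) with h | h
      · exact Or.inl (Or.inl ((hLmem x).mpr ⟨y, hy, h⟩))
      · exact Or.inl (Or.inr ((hPmem x).mpr ⟨y, hy, h⟩))
    · push_neg at hx
      exact Or.inr ((hUmem x).mpr hx)
  have hcardLP : L.card = P.card := by
    apply Finset.card_bij (fun a _ => pr a)
    · intro a ha; exact hprP a ha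
    · intro a ha a' ha' hee
      have h1 : ¬ G.rel (pr a) a := hMsymm _ _ (hMprL a ha)
      have h2 : ¬ G.rel (pr a) a' := hee ▸ hMsymm _ _ (hMprL a' ha')
      exact hmax (pr a) a a' h1 h2
    · intro b hb
      obtain ⟨y, hy, hlt⟩ := (hPmem b).mp hb
      refine ⟨y, (hLmem y).mpr ⟨b, hMsymm b y hy, hlt⟩, ?_⟩
      exact hpr_uniq y b (hMsymm b y hy)
  set k := L.card with hk
  have hcardsum : L.card + P.card + U.card = G.n := by
    have h1 : (L ∪ P ∪ U).card = (Finset.univ : Finset (Fin G.n)).card := by rw [hcover]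
    rw [Finset.card_union_of_disjoint (by
          rw [Finset.disjoint_union_left]; exact ⟨hLU, hPU⟩),
        Finset.card_union_of_disjoint hLP] at h1
    simpa using h1
  have h2k : 2*k ≤ G.n := by omega
  have hUcard : U.card = G.n - 2*k := by omega
  set eL := L.orderIsoOfFin rfl with heL
  set eU := U.orderIsoOfFin rfl with heU
  set g : Fin G.n → Fin G.n := fun a =>
    if h : a.val < 2*k then
      (if a.val % 2 = 0 then (eL ⟨a.val/2, by omega⟩ : Fin G.n)
       else pr (eL ⟨a.val/2, by omega⟩))
    else (eU ⟨a.val - 2*k, by have := a.isLt; omega⟩) with hg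
  have hg_even : ∀ (a : Fin G.n) (m : Fin k), a.val = 2*m.val → g a = (eL m : Fin G.n) := by
    intro a m hm
    simp only [hg]
    rw [dif_pos (by omega), if_pos (by omega)]
    exact congrArg (fun z : Fin k => (eL z : Fin G.n)) (Fin.ext (by simp only; omega))
  have hg_odd : ∀ (a : Fin G.n) (m : Fin k), a.val = 2*m.val+1 → g a = pr (eL m : Fin G.n) := by
    intro a m hm
    simp only [hg]
    rw [dif_pos (by omega), if_neg (by omega)]
    exact congrArg (fun z : Fin k => pr (eL z : Fin G.n)) (Fin.ext (by simp only; omega))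
  have hg_hi : ∀ (a : Fin G.n) (h1 : ¬ a.val < 2*k),
      g a = (eU ⟨a.val - 2*k, by have := a.isLt; omega⟩ : Fin G.n) := by
    intro a h1
    simp only [hg]
    rw [dif_neg h1]
  have hginj : Function.Injective g := by
    intro a b hab
    by_cases ha : a.val < 2*k <;> by_cases hb : b.val < 2*k
    · by_cases hae : a.val % 2 = 0 <;> by_cases hbe : b.val % 2 = 0
      · rw [hg_even a ⟨a.val/2, by omega⟩ (by simp only; omega),
            hg_even b ⟨b.val/2, by omega⟩ (by simp only; omega)] at hab
        have h2 := eL.injective (Subtype.coe_injective hab)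
        rw [Fin.mk.injEq] at h2
        exact Fin.ext (by omega)
      · rw [hg_even a ⟨a.val/2, by omega⟩ (by simp only; omega),
            hg_odd b ⟨b.val/2, by omega⟩ (by simp only; omega)] at hab
        have h1 : (eL ⟨a.val/2, by omega⟩ : Fin G.n) ∈ L := (eL ⟨a.val/2, by omega⟩).2
        have h2 : pr (eL ⟨b.val/2, by omega⟩ : Fin G.n) ∈ P := hprP _ (eL ⟨b.val/2, by omega⟩).2
        rw [← hab] at h2
        exact (Finset.disjoint_left.mp hLP h1 h2).elim
      · rw [hg_odd a ⟨a.val/2, by omega⟩ (by simp only; omega),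
            hg_even b ⟨b.val/2, by omega⟩ (by simp only; omega)] at hab
        have h1 : (eL ⟨b.val/2, by omega⟩ : Fin G.n) ∈ L := (eL ⟨b.val/2, by omega⟩).2
        have h2 : pr (eL ⟨a.val/2, by omega⟩ : Fin G.n) ∈ P := hprP _ (eL ⟨a.val/2, by omega⟩).2
        rw [hab] at h2
        exact (Finset.disjoint_left.mp hLP h1 h2).elim
      · rw [hg_odd a ⟨a.val/2, by omega⟩ (by simp only; omega),
            hg_odd b ⟨b.val/2, by omega⟩ (by simp only; omega)] at hab
        have m1 : ¬ G.rel (pr (eL ⟨a.val/2, by omega⟩)) (eL ⟨a.val/2, by omega⟩ : Fin G.n) :=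
          hMsymm _ _ (hMprL _ (eL ⟨a.val/2, by omega⟩).2)
        have m2' : ¬ G.rel (pr (eL ⟨b.val/2, by omega⟩)) (eL ⟨b.val/2, by omega⟩ : Fin G.n) :=
          hMsymm _ _ (hMprL _ (eL ⟨b.val/2, by omega⟩).2)
        rw [← hab] at m2'
        have h2 := eL.injective (Subtype.coe_injective (hmax _ _ _ m1 m2'))
        rw [Fin.mk.injEq] at h2
        exact Fin.ext (by omega)
    · exfalso
      have h2 : (eU ⟨b.val - 2*k, by have := b.isLt; omega⟩ : Fin G.n) ∈ U :=
        (eU ⟨b.val - 2*k, by have := b.isLt; omega⟩).2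
      rw [← hg_hi b hb, ← hab] at h2
      by_cases hae : a.val % 2 = 0
      · rw [hg_even a ⟨a.val/2, by omega⟩ (by simp only; omega)] at h2
        exact Finset.disjoint_left.mp hLU (eL ⟨a.val/2, by omega⟩).2 h2
      · rw [hg_odd a ⟨a.val/2, by omega⟩ (by simp only; omega)] at h2
        exact Finset.disjoint_left.mp hPU (hprP _ (eL ⟨a.val/2, by omega⟩).2) h2
    · exfalso
      have h2 : (eU ⟨a.val - 2*k, by have := a.isLt; omega⟩ : Fin G.n) ∈ U :=
        (eU ⟨a.val - 2*k, by have := a.isLt; omega⟩).2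
      rw [← hg_hi a ha, hab] at h2
      by_cases hbe : b.val % 2 = 0
      · rw [hg_even b ⟨b.val/2, by omega⟩ (by simp only; omega)] at h2
        exact Finset.disjoint_left.mp hLU (eL ⟨b.val/2, by omega⟩).2 h2
      · rw [hg_odd b ⟨b.val/2, by omega⟩ (by simp only; omega)] at h2
        exact Finset.disjoint_left.mp hPU (hprP _ (eL ⟨b.val/2, by omega⟩).2) h2
    · rw [hg_hi a ha, hg_hi b hb] at hab
      have h2 := eU.injective (Subtype.coe_injective hab)
      rw [Fin.mk.injEq] at h2
      have ha2 := a.isLt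
      have hb2 := b.isLt
      exact Fin.ext (by omega)
  have hbij : Function.Bijective g := Finite.injective_iff_bijective.mp hginj
  have claim1 : ∀ (m : ℕ) (hm : m < k) (a b : Fin G.n), a.val = 2*m → b.val = 2*m+1 →
      ¬ G.rel (g a) (g b) := by
    intro m hm a b hav hbv
    rw [hg_even a ⟨m, hm⟩ hav, hg_odd b ⟨m, hm⟩ hbv]
    exact hMprL _ (eL ⟨m, hm⟩).2
  have claim2 : ∀ a b : Fin G.n, ¬ G.rel (g a) (g b) →
      ∃ m, m < k ∧ ((a.val = 2*m ∧ b.val = 2*m+1) ∨ (b.val = 2*m ∧ a.val = 2*m+1)) := by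
    intro a b hM'
    by_cases ha : a.val < 2*k
    swap
    · exfalso
      rw [hg_hi a ha] at hM'
      exact hM' (((hUmem _).mp (eU ⟨a.val - 2*k, by have := a.isLt; omega⟩).2) (g b))
    by_cases hae : a.val % 2 = 0
    · refine ⟨a.val/2, by omega, Or.inl ⟨by omega, ?_⟩⟩
      rw [hg_even a ⟨a.val/2, by omega⟩ (by simp only; omega)] at hM'
      have hgb : g b = pr (eL ⟨a.val/2, by omega⟩) := (hpr_uniq _ _ hM').symm
      have hb1 : g ⟨a.val+1, by omega⟩ = pr (eL ⟨a.val/2, by omega⟩) :=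
        hg_odd ⟨a.val+1, by omega⟩ ⟨a.val/2, by omega⟩ (by simp only; omega)
      have hbeq := hginj (hgb.trans hb1.symm)
      rw [hbeq]
      simp only
      omega
    · refine ⟨a.val/2, by omega, Or.inr ⟨?_, by omega⟩⟩
      rw [hg_odd a ⟨a.val/2, by omega⟩ (by simp only; omega)] at hM'
      have m1 : ¬ G.rel (pr (eL ⟨a.val/2, by omega⟩)) (eL ⟨a.val/2, by omega⟩ : Fin G.n) :=
        hMsymm _ _ (hMprL _ (eL ⟨a.val/2, by omega⟩).2)
      have hgb : g b = (eL ⟨a.val/2, by omega⟩ : Fin G.n) := hmax _ _ _ hM' m1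
      have hb1 : g ⟨a.val-1, by omega⟩ = (eL ⟨a.val/2, by omega⟩ : Fin G.n) :=
        hg_even ⟨a.val-1, by omega⟩ ⟨a.val/2, by omega⟩ (by simp only; omega)
      have hbeq := hginj (hgb.trans hb1.symm)
      rw [hbeq]
      simp only
      omega
  have hiff : ∀ a b : Fin G.n, G.rel (g a) (g b) ↔ (Ngraph G.n k).rel a b := by
    intro a b
    constructor
    · rintro hr ⟨m, hm, hc | hc⟩
      · exact claim1 m hm a b hc.1 hc.2 hr
      · exact claim1 m hm b a hc.1 hc.2 (hG.2 _ _ hr)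
    · intro hnr
      by_contra hGr
      exact hnr (claim2 a b hGr)
  refine ⟨k, h2k, (Equiv.ofBijective g hbij).symm, fun x y => ?_⟩
  have hx : g ((Equiv.ofBijective g hbij).symm x) = x := (Equiv.ofBijective g hbij).apply_symm_apply x
  have hy : g ((Equiv.ofBijective g hbij).symm y) = y := (Equiv.ofBijective g hbij).apply_symm_apply y
  conv_lhs => rw [← hx, ← hy]
  exact hiff _ _

end MatchingIso

section Structure

lemma exists_inj_extend {a c N : ℕ} (hac : a ≤ c) (hcN : c ≤ N) (f : Fin a → Fin N)
    (hf : Function.Injective f) :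
    ∃ g : Fin c → Fin N, Function.Injective g ∧ ∀ i : Fin a, g ⟨i.val, by omega⟩ = f i := by
  classical
  have hcard : c - a ≤ (Finset.univ \ Finset.image f Finset.univ : Finset (Fin N)).card := by
    have h1 : (Finset.image f Finset.univ).card = a := by
      rw [Finset.card_image_of_injective _ hf]
      simp
    rw [Finset.card_sdiff_of_subset (Finset.subset_univ _), h1]
    simp only [Finset.card_univ, Fintype.card_fin]
    omega
  obtain ⟨T, hTsub, hTcard⟩ := Finset.exists_subset_card_eq hcard
  set e := T.orderIsoOfFin hTcard with he
  refine ⟨fun i => if h : i.val < a then f ⟨i.val, h⟩ else (e ⟨i.val - a, by omega⟩ : Fin N), ?_, ?_⟩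
  · intro x y hxy
    dsimp only at hxy
    by_cases hx : x.val < a <;> by_cases hy : y.val < a
    · rw [dif_pos hx, dif_pos hy] at hxy
      have h2 := hf hxy
      rw [Fin.mk.injEq] at h2
      exact Fin.ext h2
    · rw [dif_pos hx, dif_neg hy] at hxy
      exfalso
      have hmem := hTsub (e ⟨y.val - a, by omega⟩).2
      rw [Finset.mem_sdiff, ← hxy] at hmem
      exact hmem.2 (Finset.mem_image_of_mem f (Finset.mem_univ _))
    · rw [dif_neg hx, dif_pos hy] at hxy
      exfalso
      have hmem := hTsub (e ⟨x.val - a, by omega⟩).2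
      rw [Finset.mem_sdiff, hxy] at hmem
      exact hmem.2 (Finset.mem_image_of_mem f (Finset.mem_univ _))
    · rw [dif_neg hx, dif_neg hy] at hxy
      have h2 := e.injective (Subtype.coe_injective hxy)
      rw [Fin.mk.injEq] at h2
      exact Fin.ext (by omega)
  · intro i
    dsimp only
    rw [dif_pos (show (⟨i.val, by omega⟩ : Fin c).val < a from i.isLt)]

/-- `H` has `k` pairwise disjoint non-edges. -/
def CoDisj (H : FinBinRel) (k : ℕ) : Prop :=
  ∃ c : Fin (2*k) → Fin H.n, Function.Injective c ∧
    ∀ m : ℕ, ∀ hm : m < k, ¬ H.rel (c ⟨2*m, by omega⟩) (c ⟨2*m+1, by omega⟩)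

lemma homle_ngraph {n k : ℕ} {H : FinBinRel} (hH : ReflGraph H) (hkn : 2*k < n)
    (hn : n ≤ H.n) (hcd : CoDisj H k) : HomLe (Ngraph n k) H := by
  classical
  obtain ⟨c, hcinj, hcne⟩ := hcd
  obtain ⟨g, hginj, hgext⟩ := exists_inj_extend (by omega : 2*k ≤ n) hn c hcinj
  set f : Fin H.n → Fin n := fun v => if h : ∃ p : Fin n, g p = v then h.choose else ⟨2*k, hkn⟩
    with hf
  have hfg : ∀ p : Fin n, f (g p) = p := by
    intro p
    simp only [hf]
    rw [dif_pos ⟨p, rfl⟩]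
    exact hginj (Exists.choose_spec (⟨p, rfl⟩ : ∃ q : Fin n, g q = g p))
  have hfval : ∀ (v : Fin H.n) (w : ℕ) (hw : w < 2*k), (f v).val = w → v = g ⟨w, by omega⟩ := by
    intro v w hw hv
    by_cases h : ∃ p : Fin n, g p = v
    · have he : f v = h.choose := by simp only [hf]; rw [dif_pos h]
      rw [he] at hv
      have : h.choose = ⟨w, by omega⟩ := Fin.ext hv
      rw [← h.choose_spec, this]
    · have he : f v = ⟨2*k, hkn⟩ := by simp only [hf]; rw [dif_neg h]
      rw [he] at hv
      exact absurd hv (by simp; omega)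
  refine ⟨f, fun p => ⟨g p, hfg p⟩, ?_⟩
  intro x y hxy
  by_contra hne
  simp only [Ngraph, not_not] at hne
  obtain ⟨m, hm, hc | hc⟩ := hne
  · have hx : x = g ⟨2*m, by omega⟩ := hfval x (2*m) (by omega) hc.1
    have hy : y = g ⟨2*m+1, by omega⟩ := hfval y (2*m+1) (by omega) hc.2
    have e1 : g ⟨2*m, by omega⟩ = c ⟨2*m, by omega⟩ := hgext ⟨2*m, by omega⟩
    have e2 : g ⟨2*m+1, by omega⟩ = c ⟨2*m+1, by omega⟩ := hgext ⟨2*m+1, by omega⟩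
    rw [hx, hy, e1, e2] at hxy
    exact hcne m hm hxy
  · have hy : y = g ⟨2*m, by omega⟩ := hfval y (2*m) (by omega) hc.1
    have hx : x = g ⟨2*m+1, by omega⟩ := hfval x (2*m+1) (by omega) hc.2
    have e1 : g ⟨2*m, by omega⟩ = c ⟨2*m, by omega⟩ := hgext ⟨2*m, by omega⟩
    have e2 : g ⟨2*m+1, by omega⟩ = c ⟨2*m+1, by omega⟩ := hgext ⟨2*m+1, by omega⟩
    rw [hx, hy, e1, e2] at hxy
    exact hcne m hm (hH.2 _ _ hxy)

lemma struct_of_not_codisj {k : ℕ} {H : FinBinRel} (hn : 2*k ≤ H.n)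
    (hcd : ¬ CoDisj H k) :
    ∃ S : Fin (2*k) → Fin H.n, Function.Injective S ∧
      ∀ u v : Fin H.n, (∀ p, S p ≠ u) → (∀ p, S p ≠ v) → u ≠ v → H.rel u v := by
  classical
  have hP0 : CoDisj H 0 :=
    ⟨fun p => absurd p.isLt (by omega), fun p q _ => absurd p.isLt (by omega),
     fun m hm => absurd hm (by omega)⟩
  set j := Nat.findGreatest (fun j => CoDisj H j) k with hj
  have hPj : CoDisj H j := Nat.findGreatest_spec (Nat.zero_le k) hP0
  have hjk : j ≤ k := Nat.findGreatest_le k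
  have hjlt : j < k := lt_of_le_of_ne hjk (fun h => hcd (h ▸ hPj))
  have hnot : ¬ CoDisj H (j+1) :=
    Nat.findGreatest_is_greatest (P := fun j => CoDisj H j) (n := k) (by omega) (by omega)
  obtain ⟨c, hcinj, hcne⟩ := hPj
  obtain ⟨S, hSinj, hSext⟩ := exists_inj_extend (by omega : 2*j ≤ 2*k) hn c hcinj
  refine ⟨S, hSinj, ?_⟩
  intro u v hu hv huv
  by_contra hrel
  apply hnot
  have hcu : ∀ i : Fin (2*j), c i ≠ u := by
    intro i hi
    exact hu ⟨i.val, by omega⟩ (by rw [hSext i]; exact hi)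
  have hcv : ∀ i : Fin (2*j), c i ≠ v := by
    intro i hi
    exact hv ⟨i.val, by omega⟩ (by rw [hSext i]; exact hi)
  set c' : Fin (2*(j+1)) → Fin H.n := fun p =>
    if h : p.val < 2*j then c ⟨p.val, h⟩ else if p.val = 2*j then u else v with hc'
  refine ⟨c', ?_, ?_⟩
  · intro p q hpq
    simp only [hc'] at hpq
    by_cases hp : p.val < 2*j <;> by_cases hq : q.val < 2*j
    · rw [dif_pos hp, dif_pos hq] at hpq
      have h2 := hcinj hpq
      rw [Fin.mk.injEq] at h2
      exact Fin.ext h2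
    · rw [dif_pos hp, dif_neg hq] at hpq
      split_ifs at hpq
      · exact absurd hpq (hcu _)
      · exact absurd hpq (hcv _)
    · rw [dif_neg hp, dif_pos hq] at hpq
      split_ifs at hpq
      · exact absurd hpq.symm (hcu _)
      · exact absurd hpq.symm (hcv _)
    · rw [dif_neg hp, dif_neg hq] at hpq
      split_ifs at hpq with h1 h2 h3
      · apply Fin.ext; omega
      · exact absurd hpq huv
      · exact absurd hpq.symm huv
      · have hp2 := p.isLt
        have hq2 := q.isLt
        apply Fin.ext; omega
  · intro m hm
    simp only [hc']
    by_cases hm' : m < j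
    · rw [dif_pos (show ((⟨2*m, by omega⟩ : Fin (2*(j+1)))).val < 2*j by simp only; omega),
          dif_pos (show ((⟨2*m+1, by omega⟩ : Fin (2*(j+1)))).val < 2*j by simp only; omega)]
      exact hcne m hm'
    · have hmj : m = j := by omega
      subst hmj
      rw [dif_neg (show ¬ ((⟨2*j, by omega⟩ : Fin (2*(j+1)))).val < 2*j by simp only; omega),
          if_pos (show ((⟨2*j, by omega⟩ : Fin (2*(j+1)))).val = 2*j by simp only),
          dif_neg (show ¬ ((⟨2*j+1, by omega⟩ : Fin (2*(j+1)))).val < 2*j by simp only; omega),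
          if_neg (show ¬ ((⟨2*j+1, by omega⟩ : Fin (2*(j+1)))).val = 2*j by simp only; omega)]
      exact hrel

end Structure

section Pair

noncomputable def tmap {α β : Type*} [DecidableEq α] [DecidableEq β] (X : Finset α)
    (Y : Finset β) (hY : Y.Nonempty) (a : α) : β :=
  if h : a ∈ X then
    (Y.equivFin.symm ⟨min (X.equivFin ⟨a, h⟩).val (Y.card - 1), by
      have := Finset.card_pos.mpr hY
      omega⟩ : {b // b ∈ Y})
  else hY.choose

lemma tmap_mem {α β : Type*} [DecidableEq α] [DecidableEq β] {X : Finset α}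
    {Y : Finset β} (hY : Y.Nonempty) (a : α) : tmap X Y hY a ∈ Y := by
  unfold tmap
  split
  · exact (Y.equivFin.symm _).2
  · exact hY.choose_spec

lemma tmap_surj {α β : Type*} [DecidableEq α] [DecidableEq β] {X : Finset α}
    {Y : Finset β} (hY : Y.Nonempty) (hc : Y.card ≤ X.card) {y : β} (hy : y ∈ Y) :
    ∃ a, a ∈ X ∧ tmap X Y hY a = y := by
  have hlt : (Y.equivFin ⟨y, hy⟩).val < X.card := lt_of_lt_of_le (Fin.isLt _) hc
  refine ⟨(X.equivFin.symm ⟨(Y.equivFin ⟨y, hy⟩).val, hlt⟩ : {a // a ∈ X}),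
    (X.equivFin.symm ⟨(Y.equivFin ⟨y, hy⟩).val, hlt⟩).2, ?_⟩
  unfold tmap
  rw [dif_pos (X.equivFin.symm ⟨(Y.equivFin ⟨y, hy⟩).val, hlt⟩).2]
  simp only [Subtype.coe_eta, Equiv.apply_symm_apply]
  have key : ∀ w : Fin Y.card, w = Y.equivFin ⟨y, hy⟩ → (Y.equivFin.symm w : β) = y := by
    intro w hw
    rw [hw, Equiv.symm_apply_apply]
  refine key _ (Fin.ext ?_)
  show min ((Y.equivFin ⟨y, hy⟩) : ℕ) (Y.card - 1) = ((Y.equivFin ⟨y, hy⟩) : ℕ)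
  exact Nat.min_eq_left (Nat.le_sub_one_of_lt (Fin.isLt _))

noncomputable def tau (B : FinBinRel) {K : ℕ} (S : Fin K → Fin B.n) (v : Fin B.n) :
    Fin K → Bool :=
  fun p => decide (B.rel (S p) v)

noncomputable def tset (B : FinBinRel) {K : ℕ} (S : Fin K → Fin B.n) (t : Fin K → Bool) :
    Finset (Fin B.n) :=
  Finset.filter (fun v => (∀ p, S p ≠ v) ∧ tau B S v = t) Finset.univ

lemma tset_spec {B : FinBinRel} {K : ℕ} {S : Fin K → Fin B.n} {t : Fin K → Bool} {v : Fin B.n}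
    (h : v ∈ tset B S t) : (∀ p, S p ≠ v) ∧ tau B S v = t := by
  simpa [tset] using h

lemma tset_mem {B : FinBinRel} {K : ℕ} {S : Fin K → Fin B.n} {v : Fin B.n}
    (h : ∀ p, S p ≠ v) : v ∈ tset B S (tau B S v) := by
  simp [tset]
  exact h

lemma pair_construct {K : ℕ} {A H : FinBinRel} (hA : ReflGraph A) (hH : ReflGraph H)
    (SA : Fin K → Fin A.n) (SH : Fin K → Fin H.n)
    (hSH : Function.Injective SH)
    (hcomp : ∀ u v : Fin A.n, (∀ p, SA p ≠ u) → (∀ p, SA p ≠ v) → u ≠ v → A.rel u v)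
    (hR : ∀ p q, A.rel (SA p) (SA q) ↔ H.rel (SH p) (SH q))
    (hsupp : ∀ t, (tset H SH t).Nonempty → (tset A SA t).Nonempty)
    (hle : ∀ t, (tset A SA t).card ≤ (tset H SH t).card) :
    HomLe A H := by
  classical
  set fa : Fin H.n → Fin A.n := fun v =>
    if h : ∃ p, SH p = v then SA h.choose
    else if hv : (tset A SA (tau H SH v)).Nonempty then
      tmap (tset H SH (tau H SH v)) (tset A SA (tau H SH v)) hv v
    else absurd (hsupp _ ⟨v, tset_mem (fun p hp => h ⟨p, hp⟩)⟩) hv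
    with hfa
  have F1 : ∀ p, fa (SH p) = SA p := by
    intro p
    simp only [hfa]
    rw [dif_pos ⟨p, rfl⟩]
    exact congrArg SA (hSH (Exists.choose_spec (⟨p, rfl⟩ : ∃ q, SH q = SH p)))
  have F2 : ∀ v : Fin H.n, (∀ p, SH p ≠ v) → fa v ∈ tset A SA (tau H SH v) := by
    intro v h
    simp only [hfa]
    rw [dif_neg (show ¬ ∃ p, SH p = v by rintro ⟨p, hp⟩; exact h p hp)]
    rw [dif_pos (hsupp _ ⟨v, tset_mem h⟩)]
    exact tmap_mem _ _
  refine ⟨fa, ?_, ?_⟩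
  · -- surjective
    intro w
    by_cases hw : ∃ p, SA p = w
    · obtain ⟨p, hp⟩ := hw
      exact ⟨SH p, by rw [F1 p]; exact hp⟩
    · have houtw : ∀ p, SA p ≠ w := fun p hp => hw ⟨p, hp⟩
      have hwmem : w ∈ tset A SA (tau A SA w) := tset_mem houtw
      have hAne : (tset A SA (tau A SA w)).Nonempty := ⟨w, hwmem⟩
      obtain ⟨v, hvX, hveq⟩ := tmap_surj (X := tset H SH (tau A SA w)) hAne
        (hle (tau A SA w)) hwmem
      have hspec := tset_spec hvX
      refine ⟨v, ?_⟩
      simp only [hfa]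
      rw [dif_neg (show ¬ ∃ p, SH p = v by rintro ⟨p, hp⟩; exact hspec.1 p hp)]
      simp only [hspec.2]
      rw [dif_pos hAne]
      exact hveq
  · -- hom
    intro x y hxy
    by_cases hx : ∃ p, SH p = x <;> by_cases hy : ∃ q, SH q = y
    · obtain ⟨p, hp⟩ := hx
      obtain ⟨q, hq⟩ := hy
      rw [← hp, ← hq] at hxy ⊢
      rw [F1 p, F1 q]
      exact (hR p q).mpr hxy
    · obtain ⟨p, hp⟩ := hx
      have houty : ∀ q, SH q ≠ y := fun q hq => hy ⟨q, hq⟩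
      have hmem := F2 y houty
      have hspec := tset_spec hmem
      rw [← hp] at hxy ⊢
      rw [F1 p]
      have htau := congrFun hspec.2 p
      simp only [tau] at htau
      have : decide (H.rel (SH p) y) = true := decide_eq_true hxy
      rw [this] at htau
      exact of_decide_eq_true htau
    · obtain ⟨q, hq⟩ := hy
      have houtx : ∀ p, SH p ≠ x := fun p hp => hx ⟨p, hp⟩
      have hmem := F2 x houtx
      have hspec := tset_spec hmem
      rw [← hq] at hxy ⊢
      rw [F1 q]
      apply hA.2
      have htau := congrFun hspec.2 q
      simp only [tau] at htau
      have : decide (H.rel (SH q) x) = true := decide_eq_true (hH.2 _ _ hxy)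
      rw [this] at htau
      exact of_decide_eq_true htau
    · have houtx : ∀ p, SH p ≠ x := fun p hp => hx ⟨p, hp⟩
      have houty : ∀ q, SH q ≠ y := fun q hq => hy ⟨q, hq⟩
      have hmx := tset_spec (F2 x houtx)
      have hmy := tset_spec (F2 y houty)
      by_cases heq : fa x = fa y
      · rw [heq]; exact hA.1 _
      · exact hcomp _ _ hmx.1 hmy.1 heq

end Pair

section Main

lemma wqo_of_ngraph {G : FinBinRel} {n k : ℕ} (hnk : 2*k < n) (hiso : BinIso G (Ngraph n k)) :
    IsWqo HomLe {H | ReflGraph H ∧ ¬ HomLe G H} := by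
  classical
  intro f hf
  have hRefl : ∀ i, ReflGraph (f i) := fun i => (hf i).1
  have hAvoid : ∀ i, ¬ HomLe (Ngraph n k) (f i) := fun i hc =>
    (hf i).2 ((homle_congr_left hiso).mpr hc)
  have hdisj : ∀ i, (f i).n < n ∨ (n ≤ (f i).n ∧ ¬ CoDisj (f i) k) := by
    intro i
    by_cases h1 : (f i).n < n
    · exact Or.inl h1
    · exact Or.inr ⟨by omega, fun hcd =>
        hAvoid i (homle_ngraph (hRefl i) hnk (by omega) hcd)⟩
  have hsplit : (setOf fun i => (f i).n < n).Infinite ∨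
      (setOf fun i => ¬ ((f i).n < n)).Infinite := by
    by_contra hcon
    rw [not_or, Set.not_infinite, Set.not_infinite] at hcon
    have huniv : (Set.univ : Set ℕ) ⊆
        (setOf fun i => (f i).n < n) ∪ (setOf fun i => ¬ ((f i).n < n)) := by
      intro i _
      by_cases h : (f i).n < n
      · exact Or.inl h
      · exact Or.inr h
    exact Set.infinite_univ (Set.Finite.subset (hcon.1.union hcon.2) huniv)
  rcases hsplit with hp | hp
  · -- small graphs: pigeonhole on isomorphism type
    set p : ℕ → Prop := fun i => (f i).n < n with hpdef
    set g0 : ℕ → ℕ := fun m => Nat.nth p m with hg0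
    have hg0mem : ∀ m, (f (g0 m)).n < n := fun m => Nat.nth_mem_of_infinite hp m
    have hg0mono : ∀ {a b : ℕ}, a < b → g0 a < g0 b := fun h => (Nat.nth_lt_nth hp).mpr h
    set inv : ℕ → Fin n × (Fin n → Fin n → Bool) := fun m =>
      ((⟨(f (g0 m)).n, hg0mem m⟩ : Fin n),
       fun a b => decide (∃ ha : a.val < (f (g0 m)).n, ∃ hb : b.val < (f (g0 m)).n,
         (f (g0 m)).rel ⟨a.val, ha⟩ ⟨b.val, hb⟩)) with hinv
    obtain ⟨y, hfib⟩ := Finite.exists_infinite_fiber inv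
    have hq : (setOf fun m => inv m = y).Infinite := by
      rw [← Set.infinite_coe_iff] at *
      exact hfib
    set i0 := Nat.nth (fun m => inv m = y) 0 with hi0
    set i1 := Nat.nth (fun m => inv m = y) 1 with hi1
    have hq0 : inv i0 = y := Nat.nth_mem_of_infinite hq 0
    have hq1 : inv i1 = y := Nat.nth_mem_of_infinite hq 1
    have h01 : i0 < i1 := (Nat.nth_lt_nth hq).mpr (by omega)
    have heq : inv i0 = inv i1 := by rw [hq0, hq1]
    have hnn : (f (g0 i0)).n = (f (g0 i1)).n :=
      congrArg Fin.val (congrArg Prod.fst heq)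
    have hrel := congrArg Prod.snd heq
    simp only [hinv] at hrel
    refine ⟨g0 i0, g0 i1, hg0mono h01, ?_⟩
    refine ⟨fun v => ⟨v.val, by have := v.isLt; omega⟩, ?_, ?_⟩
    · intro w
      exact ⟨⟨w.val, by have := w.isLt; omega⟩, Fin.ext rfl⟩
    · intro x y2 hxy
      have hx' : x.val < n := by have := x.isLt; have := hg0mem i1; omega
      have hy' : y2.val < n := by have := y2.isLt; have := hg0mem i1; omega
      have hb : (decide (∃ ha : x.val < (f (g0 i0)).n, ∃ hb2 : y2.val < (f (g0 i0)).n,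
            (f (g0 i0)).rel ⟨x.val, ha⟩ ⟨y2.val, hb2⟩))
          = (decide (∃ ha : x.val < (f (g0 i1)).n, ∃ hb2 : y2.val < (f (g0 i1)).n,
            (f (g0 i1)).rel ⟨x.val, ha⟩ ⟨y2.val, hb2⟩)) :=
        congrFun (congrFun hrel ⟨x.val, hx'⟩) ⟨y2.val, hy'⟩
      have hBtrue : decide (∃ ha : x.val < (f (g0 i1)).n, ∃ hb2 : y2.val < (f (g0 i1)).n,
          (f (g0 i1)).rel ⟨x.val, ha⟩ ⟨y2.val, hb2⟩) = true :=
        decide_eq_true ⟨x.isLt, y2.isLt, hxy⟩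
      obtain ⟨ha1, hb1, hr⟩ := of_decide_eq_true (hb.trans hBtrue)
      exact hr
  · -- large graphs: bounded complement structure + Dickson
    set p : ℕ → Prop := fun i => ¬ ((f i).n < n) with hpdef
    set g0 : ℕ → ℕ := fun m => Nat.nth p m with hg0
    have hg0mem : ∀ m, ¬ ((f (g0 m)).n < n) := fun m => Nat.nth_mem_of_infinite hp m
    have hg0mono : ∀ {a b : ℕ}, a < b → g0 a < g0 b := fun h => (Nat.nth_lt_nth hp).mpr h
    have hstruct : ∀ m : ℕ, ∃ S : Fin (2*k) → Fin (f (g0 m)).n, Function.Injective S ∧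
        ∀ u v : Fin (f (g0 m)).n, (∀ q, S q ≠ u) → (∀ q, S q ≠ v) → u ≠ v →
          (f (g0 m)).rel u v := by
      intro m
      have h1 := hg0mem m
      rcases hdisj (g0 m) with h2 | h2
      · omega
      · exact struct_of_not_codisj (by omega) h2.2
    choose S hSinj hScomp using hstruct
    set inv : ℕ → ((Fin (2*k) → Fin (2*k) → Bool) × ((Fin (2*k) → Bool) → Bool)) := fun m =>
      (fun a b => decide ((f (g0 m)).rel (S m a) (S m b)),
       fun t => decide ((tset (f (g0 m)) (S m) t).Nonempty)) with hinv
    obtain ⟨y, hfib⟩ := Finite.exists_infinite_fiber inv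
    have hq : (setOf fun m => inv m = y).Infinite := by
      rw [← Set.infinite_coe_iff] at *
      exact hfib
    set g1 : ℕ → ℕ := fun m => Nat.nth (fun m' => inv m' = y) m with hg1
    have hg1mem : ∀ m, inv (g1 m) = y := fun m => Nat.nth_mem_of_infinite hq m
    have hg1mono : ∀ {a b : ℕ}, a < b → g1 a < g1 b := fun h => (Nat.nth_lt_nth hq).mpr h
    set cnt : ℕ → ((Fin (2*k) → Bool) → ℕ) := fun m =>
      fun t => (tset (f (g0 (g1 m))) (S (g1 m)) t).card with hcnt
    have hdick : (Set.univ : Set ((Fin (2*k) → Bool) → ℕ)).IsPWO :=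
      Set.isPWO_of_wellQuasiOrderedLE _
    have hdick' : ∀ h : ℕ → ((Fin (2*k) → Bool) → ℕ),
        (∀ i, h i ∈ (Set.univ : Set ((Fin (2*k) → Bool) → ℕ))) →
        ∃ a b : ℕ, a < b ∧ h a ≤ h b := fun h hh => hdick.exists_lt hh
    obtain ⟨m1, m2, hm12, hcle⟩ := hdick' cnt (fun _ => Set.mem_univ _)
    have hinveq : inv (g1 m1) = inv (g1 m2) := by rw [hg1mem, hg1mem]
    have hfst := congrArg Prod.fst hinveq
    have hsnd := congrArg Prod.snd hinveq
    simp only [hinv] at hfst hsnd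
    refine ⟨g0 (g1 m1), g0 (g1 m2), hg0mono (hg1mono hm12), ?_⟩
    apply pair_construct (hRefl _) (hRefl _) (S (g1 m1)) (S (g1 m2)) (hSinj _) (hScomp _)
    · intro a b
      exact decide_eq_decide.mp (congrFun (congrFun hfst a) b)
    · intro t hne
      have := congrFun hsnd t
      rw [decide_eq_decide] at this
      exact this.mpr hne
    · intro t
      exact Pi.le_def.mp hcle t
end Main

theorem stmt_10 (G : FinBinRel) (hG : ReflGraph G) :
    IsWqo HomLe {H | ReflGraph H ∧ ¬ HomLe G H} ↔
      ∃ n k, 2 * k < n ∧ BinIso G (Ngraph n k) := by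
  constructor
  · intro hwqo
    by_contra hR
    by_cases ha : ∃ x y z : Fin G.n, y ≠ z ∧ ¬ G.rel x y ∧ ¬ G.rel x z
    · obtain ⟨x, y, z, hyz, hxy, hxz⟩ := ha
      obtain ⟨i, j, hij, hle⟩ := hwqo (fun i => Ngraph (2*(i+1)) (i+1))
        (fun i => ⟨ngraph_refl _ _, NN_avoid hyz hxy hxz i⟩)
      exact NN_antichain hij hle
    · have hmax : ∀ x y z : Fin G.n, ¬G.rel x y → ¬G.rel x z → y = z := by
        intro x y z h1 h2
        by_contra hne
        exact ha ⟨x, y, z, hne, h1, h2⟩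
      obtain ⟨k, hk, hiso⟩ := matching_iso G hG hmax
      rcases lt_or_eq_of_le hk with h | h
      · exact hR ⟨G.n, k, h, hiso⟩
      · rw [← h] at hiso
        obtain ⟨i, j, hij, hle⟩ := hwqo (fun i => cyc (2*k+i))
          (fun i => ⟨cyc_refl _, fun hc => cyc_avoid (by omega)
            ((homle_congr_left hiso).mp hc)⟩)
        exact cyc_antichain (by omega : 2*k+i < 2*k+j) hle
  · rintro ⟨n, k, hnk, hiso⟩
    exact wqo_of_ngraph hnk hiso
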